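/- Let R be a Dedekind domain, B a Hopf algebra over R which is flat as an R-module, and A a normal Hopf subalgebra of B such that B is faithfully flat as a left A-module. Then the ideal BA⁺ is a saturated R-submodule of B (so C := B/BA⁺ is R-flat), and the R-linear map B ⊗_A B → C ⊗_R B sending b ⊗ b' to ∑ π(b₁) ⊗ b₂b' (where π : B → C is the quotient map) is a well-defined bijection. -/

import Mathlib

/-- Flatness of a left module over a possibly noncommutative ring, expressed by
Lazard's equational criterion: every linear relation `∑ aᵢ • bᵢ = 0` with
coefficients in the ring trivializes. This is equivalent to exactness of the
functor `(-) ⊗_A B` on right `A`-modules. -/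
def IsFlatMod (A B : Type*) [Ring A] [AddCommGroup B] [Module A B] : Prop :=
  ∀ (n : ℕ) (a : Fin n → A) (b : Fin n → B), (∑ i, a i • b i) = 0 →
    ∃ (m : ℕ) (c : Fin n → Fin m → A) (y : Fin m → B),
      (∀ i, b i = ∑ j, c i j • y j) ∧ ∀ j, (∑ i, a i * c i j) = 0

/-- Faithful flatness of a left module `B` over a possibly noncommutative ring `A`:
`B` is flat, and `I • B ≠ B` for every proper right ideal `I` of `A`. This is
equivalent to the functor `(-) ⊗_A B` on right `A`-modules being exact and killing
only the zero module. -/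
def IsFaithfullyFlatMod (A B : Type*) [Ring A] [AddCommGroup B] [Module A B] : Prop :=
  IsFlatMod A B ∧
    ∀ I : Submodule Aᵐᵒᵖ A, I ≠ ⊤ →
      AddSubgroup.closure {x : B | ∃ a ∈ I, ∃ y : B, x = a • y} ≠ ⊤

open TensorProduct

/-- The image of `M ⊗ N` in `B ⊗[R] B`, for submodules `M, N` of `B`. -/
noncomputable def tmulSub {R B : Type*} [CommRing R] [AddCommGroup B] [Module R B]
    (M N : Submodule R B) : Submodule R (B ⊗[R] B) :=
  LinearMap.range (TensorProduct.map M.subtype N.subtype)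

section HopfDefs

variable (R B : Type*) [CommRing R] [Ring B] [HopfAlgebra R B]

/-- The linear map `b ↦ ∑ b₁ a S(b₂)` (Sweedler notation). -/
noncomputable def lAd (a : B) : B →ₗ[R] B :=
  LinearMap.mul' R B ∘ₗ
    (TensorProduct.map LinearMap.id
      (LinearMap.mulLeft R a ∘ₗ (HopfAlgebra.antipode R : B →ₗ[R] B))) ∘ₗ
      (Coalgebra.comul : B →ₗ[R] B ⊗[R] B)

/-- The linear map `b ↦ ∑ S(b₁) a b₂` (Sweedler notation). -/
noncomputable def rAd (a : B) : B →ₗ[R] B :=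
  LinearMap.mul' R B ∘ₗ
    (TensorProduct.map
      (LinearMap.mulRight R a ∘ₗ (HopfAlgebra.antipode R : B →ₗ[R] B)) LinearMap.id) ∘ₗ
      (Coalgebra.comul : B →ₗ[R] B ⊗[R] B)

/-- An `R`-subalgebra `A` of the Hopf algebra `B` is a Hopf subalgebra if
`Δ(A) ⊆ A ⊗ A` and `S(A) ⊆ A`. -/
def IsHopfSubalgebra (A : Subalgebra R B) : Prop :=
  (∀ a ∈ A, (Coalgebra.comul : B →ₗ[R] B ⊗[R] B) a ∈
      tmulSub (Subalgebra.toSubmodule A) (Subalgebra.toSubmodule A)) ∧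
    ∀ a ∈ A, (HopfAlgebra.antipode R : B →ₗ[R] B) a ∈ A

/-- A subalgebra `A` of `B` is normal if `∑ b₁ a S(b₂) ∈ A` and `∑ S(b₁) a b₂ ∈ A`
for all `a ∈ A`, `b ∈ B`. -/
def IsNormalSubalgebra (A : Subalgebra R B) : Prop :=
  ∀ a ∈ A, ∀ b : B, lAd R B a b ∈ A ∧ rAd R B a b ∈ A

end HopfDefs

/-- A submodule `N ⊆ M` is saturated if `M/N` is `R`-torsion-free, i.e. if
`r • b ∈ N` for some non-zero `r : R` implies `b ∈ N`. -/
def IsSaturatedIn {R M : Type*} [CommRing R] [AddCommGroup M] [Module R M]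
    (N : Submodule R M) : Prop :=
  ∀ (r : R) (b : M), r ≠ 0 → r • b ∈ N → b ∈ N

section HopfAugIdeal

variable {R B : Type*} [CommRing R] [Ring B] [HopfAlgebra R B]

/-- The ideal `BA⁺` of `B` generated by the augmentation ideal
`A⁺ = A ∩ ker ε` of a subalgebra `A`, as an `R`-submodule of `B`. -/
noncomputable def hopfAugLeftSpan (A : Subalgebra R B) : Submodule R B :=
  Submodule.span R {x | ∃ (b : B) (a : B), a ∈ A ∧
    (Coalgebra.counit : B →ₗ[R] R) a = 0 ∧ x = b * a}

end HopfAugIdeal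

section FiberMap

variable {R B : Type*} [CommRing R] [Ring B] [HopfAlgebra R B]

/-- The submodule of `B ⊗[R] B` of relations defining `B ⊗[A] B`, i.e. the span of
the elements `(b a) ⊗ b' - b ⊗ (a b')` with `a ∈ A`; the quotient
`(B ⊗[R] B) / relSpan A` is `B ⊗[A] B`. -/
noncomputable def relSpan (A : Subalgebra R B) : Submodule R (B ⊗[R] B) :=
  Submodule.span R {x | ∃ (b b' : B) (a : B), a ∈ A ∧
    x = (b * a) ⊗ₜ[R] b' - b ⊗ₜ[R] (a * b')}

/-- The `R`-linear map `B ⊗[R] B → (B/BA⁺) ⊗[R] B` sending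
`b ⊗ b' ↦ ∑ π(b₁) ⊗ b₂ b'`, where `π : B → C := B/BA⁺` is the quotient map. -/
noncomputable def toFiberMap (A : Subalgebra R B) :
    B ⊗[R] B →ₗ[R] (B ⧸ hopfAugLeftSpan A) ⊗[R] B :=
  (TensorProduct.map (hopfAugLeftSpan A).mkQ (LinearMap.mul' R B)) ∘ₗ
    (TensorProduct.assoc R B B B).toLinearMap ∘ₗ
      (TensorProduct.map (Coalgebra.comul : B →ₗ[R] B ⊗[R] B) LinearMap.id)

end FiberMap


open TensorProduct Coalgebra LinearMap HopfAlgebra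

section Aux
variable {R B : Type*} [CommRing R] [Ring B] [HopfAlgebra R B]

lemma repr_smul_right {a : B} {ι : Type*} (r : Repr R a ι) :
    ∑ i ∈ r.index, counit (R:=R) (r.left i) • r.right i = a := by
  have h := sum_counit_tmul_eq (R:=R) r
  have h2 : TensorProduct.lid R B (∑ i ∈ r.index, counit (R:=R) (r.left i) ⊗ₜ r.right i)
      = TensorProduct.lid R B (1 ⊗ₜ[R] a) := by rw [h]
  rw [map_sum] at h2
  simp only [lid_tmul, one_smul] at h2
  exact h2

lemma repr_smul_left {a : B} {ι : Type*} (r : Repr R a ι) :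
    ∑ i ∈ r.index, counit (R:=R) (r.right i) • r.left i = a := by
  have h := sum_tmul_counit_eq (R:=R) r
  have h2 : TensorProduct.rid R B (∑ i ∈ r.index, r.left i ⊗ₜ counit (R:=R) (r.right i))
      = TensorProduct.rid R B (a ⊗ₜ[R] (1:R)) := by rw [h]
  rw [map_sum] at h2
  simp only [rid_tmul, one_smul] at h2
  exact h2

/-- Push a linear map through the coassociativity identity. -/
lemma coassoc_map {V : Type*} [AddCommGroup V] [Module R V]
    (Ψ : B ⊗[R] (B ⊗[R] B) →ₗ[R] V) {x : B} {ι : Type*} {κ Λ : ι → Type*} (r : Repr R x ι)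
    (a₁ : ∀ i : ι, Repr R (r.left i) (κ i)) (a₂ : ∀ i : ι, Repr R (r.right i) (Λ i)) :
    ∑ i ∈ r.index, ∑ j ∈ (a₁ i).index,
      Ψ ((a₁ i).left j ⊗ₜ ((a₁ i).right j ⊗ₜ r.right i))
    = ∑ i ∈ r.index, ∑ j ∈ (a₂ i).index,
      Ψ (r.left i ⊗ₜ ((a₂ i).left j ⊗ₜ (a₂ i).right j)) := by
  have h := sum_tmul_tmul_eq r a₁ a₂
  have h2 := congrArg Ψ h
  rw [map_sum, map_sum] at h2
  simp only [map_sum] at h2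
  exact h2

lemma lAd_repr (a : B) {x : B} {ι : Type*} (r : Repr R x ι) :
    lAd R B a x = ∑ i ∈ r.index, r.left i * (a * antipode (R:=R) (r.right i)) := by
  simp only [lAd, LinearMap.comp_apply]
  rw [show (Coalgebra.comul : B →ₗ[R] B ⊗[R] B) x = comul (R:=R) x from rfl, ← r.eq]
  rw [map_sum, map_sum]
  simp [mul'_apply]

lemma rAd_repr (a : B) {x : B} {ι : Type*} (r : Repr R x ι) :
    rAd R B a x = ∑ i ∈ r.index, (antipode (R:=R) (r.left i) * a) * r.right i := by
  simp only [rAd, LinearMap.comp_apply]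
  rw [show (Coalgebra.comul : B →ₗ[R] B ⊗[R] B) x = comul (R:=R) x from rfl, ← r.eq]
  rw [map_sum, map_sum]
  simp [mul'_apply]

lemma counit_lAd {a : B} (h0 : counit (R:=R) a = 0) (x : B) :
    counit (R:=R) (lAd R B a x) = 0 := by
  rw [lAd_repr a (Repr.arbitrary R x), map_sum]
  simp [h0]

lemma counit_rAd {a : B} (h0 : counit (R:=R) a = 0) (x : B) :
    counit (R:=R) (rAd R B a x) = 0 := by
  rw [rAd_repr a (Repr.arbitrary R x), map_sum]
  simp [h0]

lemma mul_eq_sum_lAd (a b : B) {ι : Type*} (r : Repr R b ι) :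
    ∑ i ∈ r.index, lAd R B a (r.left i) * r.right i = b * a := by
  have key := coassoc_map (R:=R) (B:=B)
    ((mul' R B) ∘ₗ lTensor B ((mul' R B) ∘ₗ rTensor B ((mulLeft R a) ∘ₗ (antipode R : B →ₗ[R] B))))
    r (fun i => Repr.arbitrary R (r.left i)) (fun i => Repr.arbitrary R (r.right i))
  simp only [LinearMap.comp_apply, lTensor_tmul, rTensor_tmul, mul'_apply, mulLeft_apply] at key
  calc ∑ i ∈ r.index, lAd R B a (r.left i) * r.right i
      = ∑ i ∈ r.index, ∑ j ∈ (Repr.arbitrary R (r.left i)).index,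
          (Repr.arbitrary R (r.left i)).left j *
            ((a * antipode (R:=R) ((Repr.arbitrary R (r.left i)).right j)) * r.right i) := by
        refine Finset.sum_congr rfl fun i _ => ?_
        rw [lAd_repr a (Repr.arbitrary R (r.left i)), Finset.sum_mul]
        exact Finset.sum_congr rfl fun j _ => by rw [mul_assoc]
    _ = ∑ i ∈ r.index, ∑ j ∈ (Repr.arbitrary R (r.right i)).index,
          r.left i * ((a * antipode (R:=R) ((Repr.arbitrary R (r.right i)).left j)) *
            (Repr.arbitrary R (r.right i)).right j) := key
    _ = b * a := by
        have step : ∀ i ∈ r.index, ∑ j ∈ (Repr.arbitrary R (r.right i)).index,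
            r.left i * ((a * antipode (R:=R) ((Repr.arbitrary R (r.right i)).left j)) *
              (Repr.arbitrary R (r.right i)).right j)
            = counit (R:=R) (r.right i) • (r.left i * a) := by
          intro i _
          have : ∀ j ∈ (Repr.arbitrary R (r.right i)).index,
              r.left i * ((a * antipode (R:=R) ((Repr.arbitrary R (r.right i)).left j)) *
                (Repr.arbitrary R (r.right i)).right j)
              = r.left i * (a * (antipode (R:=R) ((Repr.arbitrary R (r.right i)).left j) *
                (Repr.arbitrary R (r.right i)).right j)) := by
            intro j _; rw [mul_assoc]
          rw [Finset.sum_congr rfl this, ← Finset.mul_sum, ← Finset.mul_sum,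
            sum_antipode_mul_eq_algebraMap_counit (Repr.arbitrary R (r.right i)), ← Algebra.commutes,
            ← Algebra.smul_def, mul_smul_comm]
        rw [Finset.sum_congr rfl step]
        have : ∀ i ∈ r.index, counit (R:=R) (r.right i) • (r.left i * a)
            = (counit (R:=R) (r.right i) • r.left i) * a := fun i _ => (smul_mul_assoc _ _ _).symm
        rw [Finset.sum_congr rfl this, ← Finset.sum_mul, repr_smul_left r]

lemma mul_eq_sum_rAd (a b : B) {ι : Type*} (r : Repr R b ι) :
    ∑ i ∈ r.index, r.left i * rAd R B a (r.right i) = a * b := by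
  have key := coassoc_map (R:=R) (B:=B)
    ((mul' R B) ∘ₗ lTensor B ((mul' R B) ∘ₗ rTensor B ((mulRight R a) ∘ₗ (antipode R : B →ₗ[R] B))))
    r (fun i => Repr.arbitrary R (r.left i)) (fun i => Repr.arbitrary R (r.right i))
  simp only [LinearMap.comp_apply, lTensor_tmul, rTensor_tmul, mul'_apply, mulRight_apply] at key
  calc ∑ i ∈ r.index, r.left i * rAd R B a (r.right i)
      = ∑ i ∈ r.index, ∑ j ∈ (Repr.arbitrary R (r.right i)).index,
          r.left i * ((antipode (R:=R) ((Repr.arbitrary R (r.right i)).left j) * a) *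
            (Repr.arbitrary R (r.right i)).right j) := by
        refine Finset.sum_congr rfl fun i _ => ?_
        rw [rAd_repr a (Repr.arbitrary R (r.right i)), Finset.mul_sum]
    _ = ∑ i ∈ r.index, ∑ j ∈ (Repr.arbitrary R (r.left i)).index,
          (Repr.arbitrary R (r.left i)).left j *
            ((antipode (R:=R) ((Repr.arbitrary R (r.left i)).right j) * a) * r.right i) := key.symm
    _ = a * b := by
        have step : ∀ i ∈ r.index, ∑ j ∈ (Repr.arbitrary R (r.left i)).index,
            (Repr.arbitrary R (r.left i)).left j *
              ((antipode (R:=R) ((Repr.arbitrary R (r.left i)).right j) * a) * r.right i)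
            = counit (R:=R) (r.left i) • (a * r.right i) := by
          intro i _
          have : ∀ j ∈ (Repr.arbitrary R (r.left i)).index,
              (Repr.arbitrary R (r.left i)).left j *
                ((antipode (R:=R) ((Repr.arbitrary R (r.left i)).right j) * a) * r.right i)
              = ((Repr.arbitrary R (r.left i)).left j *
                antipode (R:=R) ((Repr.arbitrary R (r.left i)).right j)) * (a * r.right i) := by
            intro j _; simp only [mul_assoc]
          rw [Finset.sum_congr rfl this, ← Finset.sum_mul,
            sum_mul_antipode_eq_algebraMap_counit (Repr.arbitrary R (r.left i)), ← Algebra.smul_def]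
        rw [Finset.sum_congr rfl step]
        have : ∀ i ∈ r.index, counit (R:=R) (r.left i) • (a * r.right i)
            = a * (counit (R:=R) (r.left i) • r.right i) := fun i _ => (mul_smul_comm _ _ _).symm
        rw [Finset.sum_congr rfl this, ← Finset.mul_sum, repr_smul_right r]
    
end Aux

section AugSpan
variable {R B : Type*} [CommRing R] [Ring B] [HopfAlgebra R B] (A : Subalgebra R B)

/-- The span of products `a * b` with `a ∈ A⁺`. -/
noncomputable def auxSpan : Submodule R B :=
  Submodule.span R {x | ∃ (a b : B), a ∈ A ∧ (Coalgebra.counit : B →ₗ[R] R) a = 0 ∧ x = a * b}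

lemma hopfAugLeftSpan_eq_auxSpan (hnormal : IsNormalSubalgebra R B A) :
    hopfAugLeftSpan A = auxSpan A := by
  apply le_antisymm
  · rw [hopfAugLeftSpan]
    apply Submodule.span_le.2
    rintro x ⟨b, a, ha, h0, rfl⟩
    rw [← mul_eq_sum_lAd a b (Repr.arbitrary R b)]
    apply Submodule.sum_mem
    intro i _
    exact Submodule.subset_span ⟨lAd R B a ((Repr.arbitrary R b).left i),
      (Repr.arbitrary R b).right i, (hnormal a ha _).1, counit_lAd h0 _, rfl⟩
  · rw [auxSpan]
    apply Submodule.span_le.2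
    rintro x ⟨a, b, ha, h0, rfl⟩
    rw [← mul_eq_sum_rAd a b (Repr.arbitrary R b)]
    apply Submodule.sum_mem
    intro i _
    exact Submodule.subset_span ⟨(Repr.arbitrary R b).left i,
      rAd R B a ((Repr.arbitrary R b).right i), (hnormal a ha _).2, counit_rAd h0 _, rfl⟩

lemma auxSpan_rep {x : B} (hx : x ∈ auxSpan A) :
    ∃ (n : ℕ) (a : Fin n → ↥A) (b : Fin n → B),
      (∀ k, counit (R:=R) ((a k : B)) = 0) ∧ x = ∑ k, (a k : B) * b k := by
  induction hx using Submodule.span_induction with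
  | mem x h =>
      obtain ⟨a, b, ha, h0, rfl⟩ := h
      exact ⟨1, fun _ => ⟨a, ha⟩, fun _ => b, fun _ => h0, by simp⟩
  | zero => exact ⟨0, Fin.elim0, Fin.elim0, fun k => k.elim0, by simp⟩
  | add x y hx hy ihx ihy =>
      obtain ⟨n, a, b, h0, rfl⟩ := ihx
      obtain ⟨m, a', b', h0', rfl⟩ := ihy
      refine ⟨n + m, Fin.append a a', Fin.append b b', ?_, ?_⟩
      · intro k
        refine Fin.addCases (fun i => ?_) (fun i => ?_) k
        · rw [Fin.append_left]; exact h0 i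
        · rw [Fin.append_right]; exact h0' i
      · rw [Fin.sum_univ_add]
        simp [Fin.append_left, Fin.append_right]
  | smul r x hx ih =>
      obtain ⟨n, a, b, h0, rfl⟩ := ih
      refine ⟨n, a, fun k => r • b k, h0, ?_⟩
      rw [Finset.smul_sum]
      exact Finset.sum_congr rfl fun k _ => (mul_smul_comm _ _ _).symm

lemma hopfAug_saturated [IsDomain R] (hnormal : IsNormalSubalgebra R B A)
    (hflat : IsFlatMod ↥A B) : IsSaturatedIn (hopfAugLeftSpan A) := by
  intro r x hr hrx
  rw [hopfAugLeftSpan_eq_auxSpan A hnormal] at hrx ⊢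
  obtain ⟨n, a, b, h0, hsum⟩ := auxSpan_rep A hrx
  set α : Fin (n+1) → ↥A := Fin.cons (-(r • 1)) a with hα
  set β : Fin (n+1) → B := Fin.cons x b with hβ
  have hrel : (∑ i, α i • β i) = 0 := by
    rw [Fin.sum_univ_succ]
    simp only [hα, hβ, Fin.cons_zero, Fin.cons_succ]
    have h1 : ((-(r • (1:↥A))) • x : B) = -(r • x) := by
      show ((-(r • (1:↥A)) : ↥A) : B) * x = -(r • x)
      push_cast
      rw [neg_mul, smul_mul_assoc, one_mul]
    have h2 : ∀ k : Fin n, (a k) • (b k) = (a k : B) * b k := fun k => rfl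
    rw [h1]
    simp only [h2]
    rw [← hsum, neg_add_cancel]
  obtain ⟨m, c, y, hb, hc⟩ := hflat (n+1) α β hrel
  have hx0 : x = ∑ j, (c 0 j : B) * y j := by
    have := hb 0
    simpa [hβ, Subalgebra.smul_def, smul_eq_mul] using this
  rw [hx0]
  apply Submodule.sum_mem
  intro j _
  have hcj := hc j
  rw [Fin.sum_univ_succ] at hcj
  simp only [hα, Fin.cons_zero, Fin.cons_succ] at hcj
  have hB : ((-(r • (1:↥A)) * c 0 j + ∑ k : Fin n, a k * c (k.succ) j : ↥A) : B) = 0 := by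
    rw [hcj]; rfl
  push_cast at hB
  have hct := congrArg (Coalgebra.counit (R:=R) (A := B)) hB
  simp only [neg_mul, map_add, map_neg, map_zero, map_sum, Bialgebra.counit_mul, map_smul,
    Bialgebra.counit_one, smul_eq_mul, mul_one, h0, zero_mul, Finset.sum_const_zero,
    add_zero] at hct
  have : counit (R:=R) ((c 0 j : B)) = 0 := by
    rcases mul_eq_zero.1 (neg_eq_zero.1 hct) with h | h
    · exact absurd h hr
    · exact h
  exact Submodule.subset_span ⟨(c 0 j : B), y j, (c 0 j).2, this, rfl⟩

end AugSpan

section Gam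
variable {R B : Type*} [CommRing R] [Ring B] [HopfAlgebra R B]

/-- The translation map `b ⊗ b' ↦ ∑ b₁ ⊗ b₂ b'` on `B ⊗[R] B`. -/
noncomputable def gam : B ⊗[R] B →ₗ[R] B ⊗[R] B :=
  (TensorProduct.map LinearMap.id (LinearMap.mul' R B)) ∘ₗ
    (TensorProduct.assoc R B B B).toLinearMap ∘ₗ
      (TensorProduct.map (Coalgebra.comul : B →ₗ[R] B ⊗[R] B) LinearMap.id)

/-- The inverse translation map `b ⊗ b' ↦ ∑ b₁ ⊗ S(b₂) b'`. -/
noncomputable def gam' : B ⊗[R] B →ₗ[R] B ⊗[R] B :=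
  (TensorProduct.map LinearMap.id
      ((LinearMap.mul' R B) ∘ₗ
        (TensorProduct.map (HopfAlgebra.antipode R : B →ₗ[R] B) LinearMap.id))) ∘ₗ
    (TensorProduct.assoc R B B B).toLinearMap ∘ₗ
      (TensorProduct.map (Coalgebra.comul : B →ₗ[R] B ⊗[R] B) LinearMap.id)

lemma gam_tmul {x : B} {ι : Type*} (r : Repr R x ι) (y : B) :
    gam (x ⊗ₜ[R] y) = ∑ i ∈ r.index, r.left i ⊗ₜ (r.right i * y) := by
  simp only [gam, LinearMap.comp_apply, TensorProduct.map_tmul, LinearMap.id_coe, id_eq]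
  rw [show (Coalgebra.comul : B →ₗ[R] B ⊗[R] B) x = comul (R:=R) x from rfl, ← r.eq,
    TensorProduct.sum_tmul, map_sum, map_sum]
  simp [mul'_apply]

lemma gam'_tmul {x : B} {ι : Type*} (r : Repr R x ι) (y : B) :
    gam' (x ⊗ₜ[R] y) = ∑ i ∈ r.index, r.left i ⊗ₜ (antipode (R:=R) (r.right i) * y) := by
  simp only [gam', LinearMap.comp_apply, TensorProduct.map_tmul, LinearMap.id_coe, id_eq]
  rw [show (Coalgebra.comul : B →ₗ[R] B ⊗[R] B) x = comul (R:=R) x from rfl, ← r.eq,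
    TensorProduct.sum_tmul, map_sum, map_sum]
  simp [mul'_apply]

lemma gam_tmul_mul (x y : B) :
    gam (x ⊗ₜ[R] y) = comul (R:=R) x * ((1:B) ⊗ₜ[R] y) := by
  rw [gam_tmul (Repr.arbitrary R x) y, ← (Repr.arbitrary R x).eq, Finset.sum_mul]
  exact Finset.sum_congr rfl fun i _ => by
    rw [Algebra.TensorProduct.tmul_mul_tmul, mul_one]

lemma gam'_gam (z : B ⊗[R] B) : gam' (gam z) = z := by
  induction z using TensorProduct.induction_on with
  | zero => simp
  | add u v hu hv => rw [map_add, map_add, hu, hv]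
  | tmul x y =>
    set r := Repr.arbitrary R x with hrdef
    rw [gam_tmul r y, map_sum]
    have expand : ∀ i ∈ r.index, gam' (r.left i ⊗ₜ[R] (r.right i * y))
        = ∑ j ∈ (Repr.arbitrary R (r.left i)).index,
            (Repr.arbitrary R (r.left i)).left j ⊗ₜ[R]
              (antipode (R:=R) ((Repr.arbitrary R (r.left i)).right j) * (r.right i * y)) :=
      fun i _ => gam'_tmul (Repr.arbitrary R (r.left i)) _
    rw [Finset.sum_congr rfl expand]
    have key := coassoc_map (R:=R) (B:=B)
      (lTensor B ((mul' R B) ∘ₗ (TensorProduct.map (antipode R : B →ₗ[R] B) (mulRight R y))))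
      r (fun i => Repr.arbitrary R (r.left i)) (fun i => Repr.arbitrary R (r.right i))
    simp only [lTensor_tmul, LinearMap.comp_apply, TensorProduct.map_tmul, mul'_apply,
      mulRight_apply] at key
    rw [key]
    have step : ∀ i ∈ r.index, ∑ j ∈ (Repr.arbitrary R (r.right i)).index,
        r.left i ⊗ₜ[R] (antipode (R:=R) ((Repr.arbitrary R (r.right i)).left j) *
          ((Repr.arbitrary R (r.right i)).right j * y))
        = counit (R:=R) (r.right i) • (r.left i ⊗ₜ[R] y) := by
      intro i _
      rw [← TensorProduct.tmul_sum]
      have inner : ∑ j ∈ (Repr.arbitrary R (r.right i)).index,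
          antipode (R:=R) ((Repr.arbitrary R (r.right i)).left j) *
            ((Repr.arbitrary R (r.right i)).right j * y)
          = counit (R:=R) (r.right i) • y := by
        have : ∀ j ∈ (Repr.arbitrary R (r.right i)).index,
            antipode (R:=R) ((Repr.arbitrary R (r.right i)).left j) *
              ((Repr.arbitrary R (r.right i)).right j * y)
            = (antipode (R:=R) ((Repr.arbitrary R (r.right i)).left j) *
              (Repr.arbitrary R (r.right i)).right j) * y := fun j _ => (mul_assoc _ _ _).symm
        rw [Finset.sum_congr rfl this, ← Finset.sum_mul,
          sum_antipode_mul_eq_algebraMap_counit (Repr.arbitrary R (r.right i)), ← Algebra.smul_def]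
      rw [inner, TensorProduct.tmul_smul]
    rw [Finset.sum_congr rfl step]
    have : ∀ i ∈ r.index, counit (R:=R) (r.right i) • (r.left i ⊗ₜ[R] y)
        = (counit (R:=R) (r.right i) • r.left i) ⊗ₜ[R] y := fun i _ =>
      by rw [TensorProduct.smul_tmul']
    rw [Finset.sum_congr rfl this, ← TensorProduct.sum_tmul, repr_smul_left r]

lemma gam_gam' (z : B ⊗[R] B) : gam (gam' z) = z := by
  induction z using TensorProduct.induction_on with
  | zero => simp
  | add u v hu hv => rw [map_add, map_add, hu, hv]
  | tmul x y =>
    set r := Repr.arbitrary R x with hrdef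
    rw [gam'_tmul r y, map_sum]
    have expand : ∀ i ∈ r.index, gam (r.left i ⊗ₜ[R] (antipode (R:=R) (r.right i) * y))
        = ∑ j ∈ (Repr.arbitrary R (r.left i)).index,
            (Repr.arbitrary R (r.left i)).left j ⊗ₜ[R]
              ((Repr.arbitrary R (r.left i)).right j * (antipode (R:=R) (r.right i) * y)) :=
      fun i _ => gam_tmul (Repr.arbitrary R (r.left i)) _
    rw [Finset.sum_congr rfl expand]
    have key := coassoc_map (R:=R) (B:=B)
      (lTensor B ((mul' R B) ∘ₗ (TensorProduct.map LinearMap.id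
        ((mulRight R y) ∘ₗ (antipode R : B →ₗ[R] B)))))
      r (fun i => Repr.arbitrary R (r.left i)) (fun i => Repr.arbitrary R (r.right i))
    simp only [lTensor_tmul, LinearMap.comp_apply, TensorProduct.map_tmul, mul'_apply,
      mulRight_apply, LinearMap.id_coe, id_eq] at key
    rw [key]
    have step : ∀ i ∈ r.index, ∑ j ∈ (Repr.arbitrary R (r.right i)).index,
        r.left i ⊗ₜ[R] ((Repr.arbitrary R (r.right i)).left j *
          (antipode (R:=R) ((Repr.arbitrary R (r.right i)).right j) * y))
        = counit (R:=R) (r.right i) • (r.left i ⊗ₜ[R] y) := by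
      intro i _
      rw [← TensorProduct.tmul_sum]
      have inner : ∑ j ∈ (Repr.arbitrary R (r.right i)).index,
          (Repr.arbitrary R (r.right i)).left j *
            (antipode (R:=R) ((Repr.arbitrary R (r.right i)).right j) * y)
          = counit (R:=R) (r.right i) • y := by
        have : ∀ j ∈ (Repr.arbitrary R (r.right i)).index,
            (Repr.arbitrary R (r.right i)).left j *
              (antipode (R:=R) ((Repr.arbitrary R (r.right i)).right j) * y)
            = ((Repr.arbitrary R (r.right i)).left j *
              antipode (R:=R) ((Repr.arbitrary R (r.right i)).right j)) * y := fun j _ =>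
          (mul_assoc _ _ _).symm
        rw [Finset.sum_congr rfl this, ← Finset.sum_mul,
          sum_mul_antipode_eq_algebraMap_counit (Repr.arbitrary R (r.right i)), ← Algebra.smul_def]
      rw [inner, TensorProduct.tmul_smul]
    rw [Finset.sum_congr rfl step]
    have : ∀ i ∈ r.index, counit (R:=R) (r.right i) • (r.left i ⊗ₜ[R] y)
        = (counit (R:=R) (r.right i) • r.left i) ⊗ₜ[R] y := fun i _ =>
      by rw [TensorProduct.smul_tmul']
    rw [Finset.sum_congr rfl this, ← TensorProduct.sum_tmul, repr_smul_left r]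

lemma toFiberMap_eq_comp (A : Subalgebra R B) :
    toFiberMap A = (rTensor B (hopfAugLeftSpan A).mkQ) ∘ₗ gam := by
  have h : TensorProduct.map (hopfAugLeftSpan A).mkQ (mul' R B)
      = (rTensor B (hopfAugLeftSpan A).mkQ) ∘ₗ (TensorProduct.map LinearMap.id (mul' R B)) := by
    rw [rTensor, ← TensorProduct.map_comp, LinearMap.comp_id, LinearMap.id_comp]
  rw [toFiberMap, gam, h]
  rfl

end Gam

section Rel
universe u v
variable {R : Type u} {B : Type v} [CommRing R] [Ring B] [HopfAlgebra R B] (A : Subalgebra R B)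

lemma exists_reprA (hA : IsHopfSubalgebra R B A) {a : B} (ha : a ∈ A) :
    ∃ r : Coalgebra.Repr R a (↥(Subalgebra.toSubmodule A) × ↥(Subalgebra.toSubmodule A)),
      (∀ i : r.ι, r.left i ∈ A) ∧ (∀ i : r.ι, r.right i ∈ A) := by
  obtain ⟨t, ht⟩ := (hA.1) a ha
  obtain ⟨S, rfl⟩ := TensorProduct.exists_finset (R := R) t
  rw [map_sum] at ht
  simp only [TensorProduct.map_tmul, Submodule.coe_subtype] at ht
  refine ⟨Coalgebra.Repr.mk
    (ι := ↥(Subalgebra.toSubmodule A) × ↥(Subalgebra.toSubmodule A)) S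
    (fun p => (p.1 : B)) (fun p => (p.2 : B)) ht, fun p => p.1.2, fun p => p.2.2⟩

lemma relSpan_mul_left (c : B) {z : B ⊗[R] B} (hz : z ∈ relSpan A) :
    (c ⊗ₜ[R] (1:B)) * z ∈ relSpan A := by
  induction hz using Submodule.span_induction with
  | mem x h =>
      obtain ⟨b, b', a, ha, rfl⟩ := h
      rw [mul_sub, Algebra.TensorProduct.tmul_mul_tmul, Algebra.TensorProduct.tmul_mul_tmul,
        one_mul, one_mul, ← mul_assoc]
      exact Submodule.subset_span ⟨c * b, b', a, ha, rfl⟩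
  | zero => rw [mul_zero]; exact zero_mem _
  | add u v hu hv ihu ihv => rw [mul_add]; exact add_mem ihu ihv
  | smul r u hu ihu => rw [mul_smul_comm]; exact Submodule.smul_mem _ r ihu

lemma gam_mul_left (c : B) (z : B ⊗[R] B) :
    gam ((c ⊗ₜ[R] (1:B)) * z) = comul (R:=R) c * gam z := by
  induction z using TensorProduct.induction_on with
  | zero => simp
  | add u v hu hv => rw [mul_add, map_add, map_add, mul_add, hu, hv]
  | tmul x y =>
      rw [Algebra.TensorProduct.tmul_mul_tmul, one_mul, gam_tmul_mul, gam_tmul_mul,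
        Bialgebra.comul_mul, mul_assoc]

lemma exists_rel_gam_pure (hA : IsHopfSubalgebra R B A) {a : B} (ha : a ∈ A)
    (h0 : counit (R:=R) a = 0) (t : B) :
    ∃ w ∈ relSpan A, gam w = a ⊗ₜ[R] t := by
  obtain ⟨ra, hal, har⟩ := exists_reprA A hA ha
  refine ⟨∑ p ∈ ra.index, (((1:B) * ra.left p) ⊗ₜ[R] (antipode (R:=R) (ra.right p) * t)
      - (1:B) ⊗ₜ[R] (ra.left p * (antipode (R:=R) (ra.right p) * t))), ?_, ?_⟩
  · apply Submodule.sum_mem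
    intro p _
    exact Submodule.subset_span ⟨1, antipode (R:=R) (ra.right p) * t, ra.left p, hal p, rfl⟩
  · rw [map_sum]
    have expand : ∀ p ∈ ra.index,
        gam (((1:B) * ra.left p) ⊗ₜ[R] (antipode (R:=R) (ra.right p) * t)
          - (1:B) ⊗ₜ[R] (ra.left p * (antipode (R:=R) (ra.right p) * t)))
        = (∑ j ∈ (Repr.arbitrary R (ra.left p)).index,
            (Repr.arbitrary R (ra.left p)).left j ⊗ₜ[R]
              ((Repr.arbitrary R (ra.left p)).right j * (antipode (R:=R) (ra.right p) * t)))
          - (1:B) ⊗ₜ[R] (ra.left p * (antipode (R:=R) (ra.right p) * t)) := by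
      intro p _
      rw [map_sub, one_mul, gam_tmul (Repr.arbitrary R (ra.left p))]
      congr 1
      rw [gam_tmul_mul, Bialgebra.comul_one, one_mul]
    rw [Finset.sum_congr rfl expand, Finset.sum_sub_distrib]
    have second : ∑ p ∈ ra.index,
        (1:B) ⊗ₜ[R] (ra.left p * (antipode (R:=R) (ra.right p) * t)) = 0 := by
      rw [← TensorProduct.tmul_sum]
      have : ∀ p ∈ ra.index, ra.left p * (antipode (R:=R) (ra.right p) * t)
          = (ra.left p * antipode (R:=R) (ra.right p)) * t := fun p _ => (mul_assoc _ _ _).symm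
      rw [Finset.sum_congr rfl this, ← Finset.sum_mul, sum_mul_antipode_eq_algebraMap_counit ra, h0, map_zero,
        zero_mul, TensorProduct.tmul_zero]
    rw [second, sub_zero]
    have key := coassoc_map (R:=R) (B:=B)
      (lTensor B ((mul' R B) ∘ₗ (TensorProduct.map LinearMap.id
        ((mulRight R t) ∘ₗ (antipode R : B →ₗ[R] B)))))
      ra (fun p => Repr.arbitrary R (ra.left p)) (fun p => Repr.arbitrary R (ra.right p))
    simp only [lTensor_tmul, LinearMap.comp_apply, TensorProduct.map_tmul, mul'_apply,
      mulRight_apply, LinearMap.id_coe, id_eq] at key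
    rw [key]
    have step : ∀ p ∈ ra.index, ∑ j ∈ (Repr.arbitrary R (ra.right p)).index,
        ra.left p ⊗ₜ[R] ((Repr.arbitrary R (ra.right p)).left j *
          (antipode (R:=R) ((Repr.arbitrary R (ra.right p)).right j) * t))
        = counit (R:=R) (ra.right p) • (ra.left p ⊗ₜ[R] t) := by
      intro p _
      rw [← TensorProduct.tmul_sum]
      have : ∀ j ∈ (Repr.arbitrary R (ra.right p)).index,
          (Repr.arbitrary R (ra.right p)).left j *
            (antipode (R:=R) ((Repr.arbitrary R (ra.right p)).right j) * t)
          = ((Repr.arbitrary R (ra.right p)).left j *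
            antipode (R:=R) ((Repr.arbitrary R (ra.right p)).right j)) * t := fun j _ =>
        (mul_assoc _ _ _).symm
      rw [Finset.sum_congr rfl this, ← Finset.sum_mul,
        sum_mul_antipode_eq_algebraMap_counit (Repr.arbitrary R (ra.right p)), ← Algebra.smul_def,
        TensorProduct.tmul_smul]
    rw [Finset.sum_congr rfl step]
    have : ∀ p ∈ ra.index, counit (R:=R) (ra.right p) • (ra.left p ⊗ₜ[R] t)
        = (counit (R:=R) (ra.right p) • ra.left p) ⊗ₜ[R] t := fun p _ =>
      by rw [TensorProduct.smul_tmul']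
    rw [Finset.sum_congr rfl this, ← TensorProduct.sum_tmul, repr_smul_left ra]

lemma exists_rel_gam (hA : IsHopfSubalgebra R B A) {a : B} (ha : a ∈ A)
    (h0 : counit (R:=R) a = 0) (b t : B) :
    ∃ w ∈ relSpan A, gam w = (b * a) ⊗ₜ[R] t := by
  set rb := Repr.arbitrary R b with hrb
  have hw : ∀ i : rb.ι, ∃ w ∈ relSpan A,
      gam w = a ⊗ₜ[R] (antipode (R:=R) (rb.right i) * t) := fun i =>
    exists_rel_gam_pure A hA ha h0 _
  choose w hw1 hw2 using hw
  refine ⟨∑ i ∈ rb.index, (rb.left i ⊗ₜ[R] (1:B)) * w i, ?_, ?_⟩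
  · exact Submodule.sum_mem _ fun i _ => relSpan_mul_left A _ (hw1 i)
  · rw [map_sum]
    have expand : ∀ i ∈ rb.index, gam ((rb.left i ⊗ₜ[R] (1:B)) * w i)
        = ∑ j ∈ (Repr.arbitrary R (rb.left i)).index,
            ((Repr.arbitrary R (rb.left i)).left j * a) ⊗ₜ[R]
              ((Repr.arbitrary R (rb.left i)).right j * (antipode (R:=R) (rb.right i) * t)) := by
      intro i _
      rw [gam_mul_left, hw2 i, ← (Repr.arbitrary R (rb.left i)).eq, Finset.sum_mul]
      exact Finset.sum_congr rfl fun j _ => by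
        rw [Algebra.TensorProduct.tmul_mul_tmul]
    rw [Finset.sum_congr rfl expand]
    have key := coassoc_map (R:=R) (B:=B)
      (TensorProduct.map (mulRight R a) ((mul' R B) ∘ₗ (TensorProduct.map LinearMap.id
        ((mulRight R t) ∘ₗ (antipode R : B →ₗ[R] B)))))
      rb (fun i => Repr.arbitrary R (rb.left i)) (fun i => Repr.arbitrary R (rb.right i))
    simp only [LinearMap.comp_apply, TensorProduct.map_tmul, mul'_apply,
      mulRight_apply, LinearMap.id_coe, id_eq] at key
    rw [key]
    have step : ∀ i ∈ rb.index, ∑ j ∈ (Repr.arbitrary R (rb.right i)).index,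
        (rb.left i * a) ⊗ₜ[R] ((Repr.arbitrary R (rb.right i)).left j *
          (antipode (R:=R) ((Repr.arbitrary R (rb.right i)).right j) * t))
        = counit (R:=R) (rb.right i) • ((rb.left i * a) ⊗ₜ[R] t) := by
      intro i _
      rw [← TensorProduct.tmul_sum]
      have : ∀ j ∈ (Repr.arbitrary R (rb.right i)).index,
          (Repr.arbitrary R (rb.right i)).left j *
            (antipode (R:=R) ((Repr.arbitrary R (rb.right i)).right j) * t)
          = ((Repr.arbitrary R (rb.right i)).left j *
            antipode (R:=R) ((Repr.arbitrary R (rb.right i)).right j)) * t := fun j _ =>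
        (mul_assoc _ _ _).symm
      rw [Finset.sum_congr rfl this, ← Finset.sum_mul,
        sum_mul_antipode_eq_algebraMap_counit (Repr.arbitrary R (rb.right i)), ← Algebra.smul_def,
        TensorProduct.tmul_smul]
    rw [Finset.sum_congr rfl step]
    have : ∀ i ∈ rb.index, counit (R:=R) (rb.right i) • ((rb.left i * a) ⊗ₜ[R] t)
        = ((counit (R:=R) (rb.right i) • rb.left i) * a) ⊗ₜ[R] t := fun i _ => by
      rw [TensorProduct.smul_tmul', smul_mul_assoc]
    rw [Finset.sum_congr rfl this, ← TensorProduct.sum_tmul, ← Finset.sum_mul,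
      repr_smul_left rb]


lemma mkQ_mul_right_mem {x u : B} (hu : u ∈ A) :
    (hopfAugLeftSpan A).mkQ (x * u) = counit (R:=R) u • (hopfAugLeftSpan A).mkQ x := by
  have hmem : x * u - counit (R:=R) u • x ∈ hopfAugLeftSpan A := by
    have heq : x * u - counit (R:=R) u • x = x * (u - algebraMap R B (counit (R:=R) u)) := by
      rw [mul_sub]
      congr 1
      rw [← Algebra.commutes, ← Algebra.smul_def]
    rw [heq]
    refine Submodule.subset_span ⟨x, u - algebraMap R B (counit (R:=R) u),
      sub_mem hu (A.algebraMap_mem _), ?_, rfl⟩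
    rw [map_sub]
    simp [Bialgebra.counit_algebraMap]
  have h1 : (hopfAugLeftSpan A).mkQ (x * u) = (hopfAugLeftSpan A).mkQ (counit (R:=R) u • x) := by
    rw [Submodule.mkQ_apply, Submodule.mkQ_apply, Submodule.Quotient.eq]
    exact hmem
  rw [h1, map_smul]

lemma relSpan_le_ker (hA : IsHopfSubalgebra R B A) :
    relSpan A ≤ LinearMap.ker (toFiberMap A) := by
  rw [relSpan]
  apply Submodule.span_le.2
  rintro x ⟨b, b', a, ha, rfl⟩
  rw [SetLike.mem_coe, mem_ker, toFiberMap_eq_comp, LinearMap.comp_apply, map_sub, map_sub,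
    sub_eq_zero]
  obtain ⟨ra, hal, har⟩ := exists_reprA A hA ha
  set rb := Repr.arbitrary R b with hrb
  have h1 : gam ((b * a) ⊗ₜ[R] b') = ∑ i ∈ rb.index, ∑ p ∈ ra.index,
      (rb.left i * ra.left p) ⊗ₜ[R] (rb.right i * ra.right p * b') := by
    rw [gam_tmul_mul, Bialgebra.comul_mul, ← rb.eq, ← ra.eq, Finset.sum_mul_sum,
      Finset.sum_mul]
    refine Finset.sum_congr rfl fun i _ => ?_
    rw [Finset.sum_mul]
    refine Finset.sum_congr rfl fun p _ => ?_
    rw [Algebra.TensorProduct.tmul_mul_tmul, Algebra.TensorProduct.tmul_mul_tmul, mul_one]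
  have h2 : gam (b ⊗ₜ[R] (a * b')) = ∑ i ∈ rb.index,
      rb.left i ⊗ₜ[R] (rb.right i * (a * b')) := gam_tmul rb _
  rw [h1, h2, map_sum, map_sum]
  have lhs : ∀ i ∈ rb.index, (rTensor B (hopfAugLeftSpan A).mkQ)
      (∑ p ∈ ra.index, (rb.left i * ra.left p) ⊗ₜ[R] (rb.right i * ra.right p * b'))
      = ∑ p ∈ ra.index, counit (R:=R) (ra.left p) •
          (((hopfAugLeftSpan A).mkQ (rb.left i)) ⊗ₜ[R] (rb.right i * (ra.right p * b'))) := by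
    intro i _
    rw [map_sum]
    refine Finset.sum_congr rfl fun p _ => ?_
    rw [rTensor_tmul, mkQ_mul_right_mem A (hal p), TensorProduct.smul_tmul', mul_assoc]
  have rhs : ∀ i ∈ rb.index, (rTensor B (hopfAugLeftSpan A).mkQ)
      (rb.left i ⊗ₜ[R] (rb.right i * (a * b')))
      = ∑ p ∈ ra.index, counit (R:=R) (ra.left p) •
          (((hopfAugLeftSpan A).mkQ (rb.left i)) ⊗ₜ[R] (rb.right i * (ra.right p * b'))) := by
    intro i _
    rw [rTensor_tmul]
    have ha' : a * b' = ∑ p ∈ ra.index, counit (R:=R) (ra.left p) • (ra.right p * b') := by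
      have h := congrArg (· * b') (repr_smul_right ra)
      rw [← h, Finset.sum_mul]
      exact Finset.sum_congr rfl fun p _ => smul_mul_assoc _ _ _
    rw [ha', Finset.mul_sum, TensorProduct.tmul_sum]
    refine Finset.sum_congr rfl fun p _ => ?_
    rw [mul_smul_comm, TensorProduct.tmul_smul]
  rw [Finset.sum_congr rfl lhs, Finset.sum_congr rfl rhs]

end Rel


/-- **Proposition.** Let `R` be a Dedekind domain, `B` an `R`-flat Hopf algebra and
`A` a normal Hopf subalgebra of `B` such that `B` is faithfully flat as a left
`A`-module. Then the ideal `BA⁺` is a saturated `R`-submodule of `B` (so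
`C := B/BA⁺` is `R`-flat), and the map `B ⊗[A] B → C ⊗[R] B`,
`b ⊗ b' ↦ ∑ π(b₁) ⊗ b₂ b'`, is a well-defined bijection. -/
theorem galois_map_bijective
    (R B : Type*) [CommRing R] [IsDomain R] [IsDedekindDomain R]
    [Ring B] [HopfAlgebra R B] [Module.Flat R B]
    (A : Subalgebra R B) (hA : IsHopfSubalgebra R B A)
    (hnormal : IsNormalSubalgebra R B A)
    (hff : IsFaithfullyFlatMod ↥A B) :
    IsSaturatedIn (hopfAugLeftSpan A) ∧
    ∃ h : relSpan A ≤ LinearMap.ker (toFiberMap A),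
      Function.Bijective ((relSpan A).liftQ (toFiberMap A) h) := by
  refine ⟨hopfAug_saturated A hnormal hff.1, relSpan_le_ker A hA, ?_, ?_⟩
  · -- injectivity
    rw [← LinearMap.ker_eq_bot]
    apply Submodule.ker_liftQ_eq_bot
    intro x hx
    rw [LinearMap.mem_ker, toFiberMap_eq_comp, LinearMap.comp_apply] at hx
    have h2 : gam x ∈ LinearMap.range (LinearMap.rTensor B (hopfAugLeftSpan A).subtype) := by
      rw [← rTensor_mkQ]
      exact hx
    obtain ⟨z, hz⟩ := h2
    have h3 : gam x ∈ Submodule.map (gam (R:=R) (B:=B)) (relSpan A) := by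
      rw [← hz]
      clear hz hx
      induction z using TensorProduct.induction_on with
      | zero => rw [map_zero]; exact zero_mem _
      | add u v hu hv => rw [map_add]; exact add_mem hu hv
      | tmul k t =>
          rw [LinearMap.rTensor_tmul, Submodule.coe_subtype]
          have hk : (k : B) ∈ Submodule.span R {x : B | ∃ (b a : B), a ∈ A ∧
              (Coalgebra.counit : B →ₗ[R] R) a = 0 ∧ x = b * a} := k.2
          refine Submodule.span_induction ?_ ?_ ?_ ?_ hk
          · rintro v ⟨b, a, ha, h0, rfl⟩
            obtain ⟨w, hw, hgw⟩ := exists_rel_gam A hA ha h0 b t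
            exact ⟨w, hw, hgw⟩
          · rw [TensorProduct.zero_tmul]; exact zero_mem _
          · intro u v _ _ ihu ihv
            rw [TensorProduct.add_tmul]; exact add_mem ihu ihv
          · intro r u _ ihu
            rw [← TensorProduct.smul_tmul']
            exact Submodule.smul_mem _ r ihu
    obtain ⟨w, hw, hgw⟩ := h3
    have hxw : w = x := by
      have := congrArg (gam' (R:=R) (B:=B)) hgw
      rwa [gam'_gam, gam'_gam] at this
    exact hxw ▸ hw
  · -- surjectivity
    have hsur : Function.Surjective (toFiberMap A) := by
      rw [toFiberMap_eq_comp, LinearMap.coe_comp]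
      exact Function.Surjective.comp
        (LinearMap.rTensor_surjective B (Submodule.mkQ_surjective (hopfAugLeftSpan A)))
        (fun z => ⟨gam' z, gam_gam' z⟩)
    intro v
    obtain ⟨u, hu⟩ := hsur v
    exact ⟨Submodule.Quotient.mk u, by rwa [Submodule.liftQ_apply]⟩
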